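/- Let σ and τ be permutations of a finite type, where σ has cycle type (2,…,2) with s twos (a product of s pairwise disjoint transpositions) and τ has cycle type {c} (a single c-cycle, c ≥ 2). If the norms are additive, N(στ) = N(σ) + N(τ) = s + (c−1), then every transposition in the cycle decomposition of σ moves at most one point moved by τ; that is, for every point a, if σ a ≠ a and τ a ≠ a, then τ (σ a) = σ a. -/

import Mathlib

/-- The norm of a permutation: the sum over its cycle type of (cycle length − 1). -/
def permNorm {α : Type*} [Fintype α] [DecidableEq α] (σ : Equiv.Perm α) : ℕ :=
  (σ.cycleType.map (· - 1)).sum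

open Equiv Equiv.Perm

section Aux

variable {α : Type*} [Fintype α] [DecidableEq α]

lemma multiset_sum_map_sub_one (m : Multiset ℕ) (h : ∀ x ∈ m, 1 ≤ x) :
    (m.map (· - 1)).sum + Multiset.card m = m.sum := by
  induction m using Multiset.induction_on with
  | empty => simp
  | cons a s ih =>
    have ha := h a (Multiset.mem_cons_self a s)
    have hs := ih (fun x hx => h x (Multiset.mem_cons_of_mem hx))
    simp only [Multiset.map_cons, Multiset.sum_cons, Multiset.card_cons]
    omega

lemma permNorm_add_card (f : Perm α) :
    permNorm f + Multiset.card f.cycleType = f.support.card := by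
  rw [← Equiv.Perm.sum_cycleType]
  exact multiset_sum_map_sub_one _
    (fun x hx => le_trans one_le_two (Equiv.Perm.two_le_of_mem_cycleType hx))

lemma card_cycleType_eq (f : Perm α) :
    Multiset.card f.cycleType = f.cycleFactorsFinset.card := by
  rw [Equiv.Perm.cycleType_def, Multiset.card_map]
  rfl

/-- The `SameCycle` relation as a setoid. -/
def scSetoid (f : Perm α) : Setoid α :=
  ⟨f.SameCycle, ⟨fun x => Equiv.Perm.SameCycle.refl f x,
    fun h => h.symm, fun h1 h2 => h1.trans h2⟩⟩

lemma card_quot_scSetoid (f : Perm α) :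
    Nat.card (Quotient (scSetoid f))
      = f.cycleFactorsFinset.card + (Fintype.card α - f.support.card) := by
  classical
  have hwd : ∀ a b : α, f.SameCycle a b →
      (if h : a ∈ f.support then
        (Sum.inl ⟨f.cycleOf a, cycleOf_mem_cycleFactorsFinset_iff.2 h⟩ :
          ↥f.cycleFactorsFinset ⊕ ↥(Function.fixedPoints ⇑f))
      else Sum.inr ⟨a, Equiv.Perm.notMem_support.1 h⟩)
      = (if h : b ∈ f.support then
        (Sum.inl ⟨f.cycleOf b, cycleOf_mem_cycleFactorsFinset_iff.2 h⟩ :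
          ↥f.cycleFactorsFinset ⊕ ↥(Function.fixedPoints ⇑f))
      else Sum.inr ⟨b, Equiv.Perm.notMem_support.1 h⟩) := by
    intro a b hab
    by_cases ha : a ∈ f.support
    · have hb : b ∈ f.support := by
        obtain ⟨k, hk⟩ := hab
        rw [← hk]
        exact Equiv.Perm.zpow_apply_mem_support.2 ha
      rw [dif_pos ha, dif_pos hb]
      simp [hab.cycleOf_eq]
    · have hfa : f a = a := Equiv.Perm.notMem_support.1 ha
      obtain ⟨k, hk⟩ := hab
      have hba : b = a := by
        rw [← hk, Equiv.Perm.zpow_apply_eq_self_of_apply_eq_self hfa]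
      subst hba
      rfl
  let F : Quotient (scSetoid f) → ↥f.cycleFactorsFinset ⊕ ↥(Function.fixedPoints ⇑f) :=
    Quotient.lift (fun a => if h : a ∈ f.support then
        (Sum.inl ⟨f.cycleOf a, cycleOf_mem_cycleFactorsFinset_iff.2 h⟩ :
          ↥f.cycleFactorsFinset ⊕ ↥(Function.fixedPoints ⇑f))
      else Sum.inr ⟨a, Equiv.Perm.notMem_support.1 h⟩) hwd
  have hbij : Function.Bijective F := by
    constructor
    · rintro q1 q2
      induction q1 using Quotient.ind with | _ a =>
      induction q2 using Quotient.ind with | _ b =>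
      intro hab
      change dite _ _ _ = dite _ _ _ at hab
      apply Quotient.sound
      by_cases ha : a ∈ f.support <;> by_cases hb : b ∈ f.support
      · simp only [F, Quotient.lift_mk, dif_pos ha, dif_pos hb, Sum.inl.injEq,
          Subtype.mk.injEq] at hab
        have hbmem : b ∈ (f.cycleOf a).support := by
          rw [hab, mem_support_cycleOf_iff]
          exact ⟨Equiv.Perm.SameCycle.refl f b, hb⟩
        exact (mem_support_cycleOf_iff.1 hbmem).1
      · simp only [F, Quotient.lift_mk, dif_pos ha, dif_neg hb] at hab
        cases hab
      · simp only [F, Quotient.lift_mk, dif_neg ha, dif_pos hb] at hab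
        cases hab
      · simp only [F, Quotient.lift_mk, dif_neg ha, dif_neg hb, Sum.inr.injEq,
          Subtype.mk.injEq] at hab
        exact (show a = b from congrArg Subtype.val hab) ▸ Equiv.Perm.SameCycle.refl f b
    · rintro (⟨p, hp⟩ | ⟨a, ha⟩)
      · have hcyc : p.IsCycle := (mem_cycleFactorsFinset_iff.1 hp).1
        have hpne : p.support ≠ ∅ := fun h => hcyc.ne_one (support_eq_empty_iff.1 h)
        obtain ⟨a, hap⟩ := Finset.nonempty_iff_ne_empty.2 hpne
        have hpa : p = f.cycleOf a := Equiv.Perm.cycle_is_cycleOf hap hp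
        have haf : a ∈ f.support := by
          rw [Equiv.Perm.mem_support]
          intro h
          have : p a = a := by
            rw [(mem_cycleFactorsFinset_iff.1 hp).2 a hap, h]
          exact (Equiv.Perm.mem_support.1 hap) this
        refine ⟨Quotient.mk (scSetoid f) a, ?_⟩
        show dite _ _ _ = _
        rw [dif_pos haf]
        exact congrArg Sum.inl (Subtype.ext hpa.symm)
      · refine ⟨Quotient.mk (scSetoid f) a, ?_⟩
        have haf : a ∉ f.support := by
          rw [Equiv.Perm.notMem_support]; exact ha
        exact dif_neg haf
  rw [Nat.card_eq_of_bijective F hbij, Nat.card_sum]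
  congr 1
  · rw [Nat.card_eq_fintype_card, Fintype.card_coe]
  · rw [Nat.card_eq_fintype_card, Equiv.Perm.card_fixedPoints, Equiv.Perm.sum_cycleType]

lemma permNorm_add_card_quot (f : Perm α) :
    permNorm f + Nat.card (Quotient (scSetoid f)) = Fintype.card α := by
  have h1 := permNorm_add_card f
  have h2 := card_cycleType_eq f
  have h3 := card_quot_scSetoid f
  have h4 : f.support.card ≤ Fintype.card α := Finset.card_le_univ _
  omega

/-- The setoid obtained from `SameCycle f` by merging the classes of `x` and `y`. -/
def mergedSetoid (f : Perm α) (x y : α) : Setoid α :=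
  ⟨fun u v => f.SameCycle u v ∨ (f.SameCycle u x ∧ f.SameCycle y v) ∨
      (f.SameCycle u y ∧ f.SameCycle x v),
   ⟨fun u => Or.inl (Equiv.Perm.SameCycle.refl f u),
    by
      rintro u v (h | ⟨h1, h2⟩ | ⟨h1, h2⟩)
      · exact Or.inl h.symm
      · exact Or.inr (Or.inr ⟨h2.symm, h1.symm⟩)
      · exact Or.inr (Or.inl ⟨h2.symm, h1.symm⟩),
    by
      rintro u v w (h | ⟨h1, h2⟩ | ⟨h1, h2⟩) (h' | ⟨h1', h2'⟩ | ⟨h1', h2'⟩)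
      · exact Or.inl (h.trans h')
      · exact Or.inr (Or.inl ⟨h.trans h1', h2'⟩)
      · exact Or.inr (Or.inr ⟨h.trans h1', h2'⟩)
      · exact Or.inr (Or.inl ⟨h1, h2.trans h'⟩)
      · exact Or.inr (Or.inl ⟨h1, h2'⟩)
      · exact Or.inl (h1.trans h2')
      · exact Or.inr (Or.inr ⟨h1, h2.trans h'⟩)
      · exact Or.inl (h1.trans h2')
      · exact Or.inr (Or.inr ⟨h1, h2'⟩)⟩⟩

lemma card_quot_le_merged (f : Perm α) (x y : α) :
    Nat.card (Quotient (scSetoid f)) ≤ Nat.card (Quotient (mergedSetoid f x y)) + 1 := by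
  classical
  let G : Quotient (scSetoid f) → Quotient (mergedSetoid f x y) ⊕ Unit :=
    Quotient.lift (fun a => if f.SameCycle a y then Sum.inr () else
        Sum.inl (Quotient.mk (mergedSetoid f x y) a))
      (by
        intro a b hab
        by_cases hay : f.SameCycle a y
        · rw [if_pos hay, if_pos ((Equiv.Perm.SameCycle.symm hab).trans hay)]
        · have hby : ¬ f.SameCycle b y := fun h => hay (hab.trans h)
          rw [if_neg hay, if_neg hby]
          exact congrArg _ (Quotient.sound (Or.inl hab)))
  have hinj : Function.Injective G := by
    rintro q1 q2
    induction q1 using Quotient.ind with | _ a =>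
    induction q2 using Quotient.ind with | _ b =>
    intro hab
    by_cases hay : f.SameCycle a y <;> by_cases hby : f.SameCycle b y
    · exact Quotient.sound (hay.trans hby.symm)
    · simp only [G, Quotient.lift_mk, if_pos hay, if_neg hby] at hab
      cases hab
    · simp only [G, Quotient.lift_mk, if_neg hay, if_pos hby] at hab
      cases hab
    · simp only [G, Quotient.lift_mk, if_neg hay, if_neg hby, Sum.inl.injEq] at hab
      rcases Quotient.exact hab with h | ⟨h1, h2⟩ | ⟨h1, h2⟩
      · exact Quotient.sound h
      · exact absurd h2.symm hby
      · exact absurd h1 hay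
  calc Nat.card (Quotient (scSetoid f))
      ≤ Nat.card (Quotient (mergedSetoid f x y) ⊕ Unit) :=
        Nat.card_le_card_of_injective G hinj
    _ = Nat.card (Quotient (mergedSetoid f x y)) + 1 := by
        simp [Nat.card_sum]

lemma merged_le_card_quot_swap_mul (f : Perm α) (x y : α) :
    Nat.card (Quotient (mergedSetoid f x y))
      ≤ Nat.card (Quotient (scSetoid (Equiv.swap x y * f))) := by
  classical
  set g : Perm α := Equiv.swap x y * f with hg
  have hstep : ∀ u : α, (mergedSetoid f x y).r u (g u) := by
    intro u
    have hgu : g u = Equiv.swap x y (f u) := rfl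
    by_cases h1 : f u = x
    · have : g u = y := by rw [hgu, h1, Equiv.swap_apply_left]
      rw [this]
      exact Or.inr (Or.inl ⟨⟨1, by simpa using h1⟩, Equiv.Perm.SameCycle.refl f y⟩)
    · by_cases h2 : f u = y
      · have : g u = x := by rw [hgu, h2, Equiv.swap_apply_right]
        rw [this]
        exact Or.inr (Or.inr ⟨⟨1, by simpa using h2⟩, Equiv.Perm.SameCycle.refl f x⟩)
      · have : g u = f u := by rw [hgu, Equiv.swap_apply_of_ne_of_ne h1 h2]
        rw [this]
        exact Or.inl ⟨1, by simp⟩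
  have hwd : ∀ a b : α, g.SameCycle a b → (mergedSetoid f x y).r a b := by
    intro a b hab
    obtain ⟨k, hk⟩ := hab
    subst hk
    have key : ∀ k : ℤ, (mergedSetoid f x y).r a ((g ^ k) a) := by
      intro k
      induction k using Int.induction_on with
      | zero => exact (mergedSetoid f x y).iseqv.refl a
      | succ n ih =>
        have : (g ^ ((n : ℤ) + 1)) a = g ((g ^ (n : ℤ)) a) := by
          rw [add_comm, zpow_add, zpow_one, Equiv.Perm.mul_apply]
        rw [this]
        exact (mergedSetoid f x y).iseqv.trans ih (hstep _)
      | pred n ih =>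
        have : (g ^ ((-n : ℤ) - 1)) a = g⁻¹ ((g ^ (-n : ℤ)) a) := by
          rw [sub_eq_add_neg, add_comm, zpow_add, zpow_neg_one, Equiv.Perm.mul_apply]
        rw [this]
        refine (mergedSetoid f x y).iseqv.trans ih ?_
        have := hstep (g⁻¹ ((g ^ (-n : ℤ)) a))
        rw [show g (g⁻¹ ((g ^ (-n : ℤ)) a)) = (g ^ (-n : ℤ)) a from g.apply_symm_apply _] at this
        exact (mergedSetoid f x y).iseqv.symm this
    exact key k
  let H : Quotient (scSetoid g) → Quotient (mergedSetoid f x y) :=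
    Quotient.lift (fun a => Quotient.mk (mergedSetoid f x y) a)
      (fun a b hab => Quotient.sound (hwd a b hab))
  have hsurj : Function.Surjective H := by
    intro q
    induction q using Quotient.ind with | _ a =>
    exact ⟨Quotient.mk (scSetoid g) a, rfl⟩
  exact Nat.card_le_card_of_surjective H hsurj

/-- Key lemma: multiplying by a transposition increases the norm by at most one. -/
lemma permNorm_swap_mul_le (f : Perm α) (x y : α) :
    permNorm (Equiv.swap x y * f) ≤ permNorm f + 1 := by
  have h1 := permNorm_add_card_quot f
  have h2 := permNorm_add_card_quot (Equiv.swap x y * f)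
  have h3 := card_quot_le_merged f x y
  have h4 := merged_le_card_quot_swap_mul f x y
  omega

/-- Peeling off `k` disjoint transpositions. -/
lemma permNorm_mul_le_of_replicate_two :
    ∀ (k : ℕ) (f g : Perm α), f.cycleType = Multiset.replicate k 2 →
      permNorm (f * g) ≤ k + permNorm g := by
  intro k
  induction k with
  | zero =>
    intro f g hf
    have hf1 : f = 1 := Equiv.Perm.cycleType_eq_zero.1 (by simpa using hf)
    subst hf1
    simp
  | succ k ih =>
    intro f g hf
    have hne : f ≠ 1 := by
      intro h
      rw [h, Equiv.Perm.cycleType_one] at hf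
      have : (0 : Multiset ℕ) ≠ Multiset.replicate (k + 1) 2 := by
        simp [Multiset.replicate_succ]
      exact this hf
    have hsup : f.support ≠ ∅ := fun h => hne (support_eq_empty_iff.1 h)
    obtain ⟨a, ha⟩ := Finset.nonempty_iff_ne_empty.2 hsup
    set p := f.cycleOf a with hp
    have hpf : p ∈ f.cycleFactorsFinset := cycleOf_mem_cycleFactorsFinset_iff.2 ha
    have hcard : p.support.card = 2 := by
      have hmem : p.support.card ∈ f.cycleType := by
        rw [Equiv.Perm.cycleType_def]
        exact Multiset.mem_map_of_mem _ hpf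
      rw [hf] at hmem
      exact Multiset.eq_of_mem_replicate hmem
    obtain ⟨x, y, hxy, hpswap⟩ := Equiv.Perm.card_support_eq_two.1 hcard
    have hct : p.cycleType = {2} := by
      have := (mem_cycleFactorsFinset_iff.1 hpf).1.cycleType
      rw [hcard] at this
      simpa using this
    have hf' : (f * p⁻¹).cycleType = Multiset.replicate k 2 := by
      rw [Equiv.Perm.cycleType_mul_inv_mem_cycleFactorsFinset_eq_sub hpf, hf, hct,
        Multiset.sub_singleton, Multiset.replicate_succ, Multiset.erase_cons_head]
    have hfactor : f * g = (f * p⁻¹) * (p * g) := by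
      rw [mul_assoc, ← mul_assoc p⁻¹, inv_mul_cancel, one_mul]
    calc permNorm (f * g) = permNorm ((f * p⁻¹) * (p * g)) := by rw [← hfactor]
      _ ≤ k + permNorm (p * g) := ih (f * p⁻¹) (p * g) hf'
      _ ≤ k + (permNorm g + 1) := by
          have := permNorm_swap_mul_le g x y
          rw [← hpswap] at this
          omega
      _ = (k + 1) + permNorm g := by omega

lemma sign_eq_neg_one_pow_permNorm (f : Perm α) :
    Equiv.Perm.sign f = (-1 : ℤˣ) ^ permNorm f := by
  rw [Equiv.Perm.sign_of_cycleType]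
  have h := permNorm_add_card f
  have h2 := Equiv.Perm.sum_cycleType f
  have : f.cycleType.sum + Multiset.card f.cycleType
      = permNorm f + 2 * Multiset.card f.cycleType := by omega
  rw [this, pow_add, pow_mul]
  norm_num

end Aux

/-- If `σ` is a product of `s` disjoint transpositions, `τ` a single `c`-cycle
(`c ≥ 2`), and the norms are additive (`N(στ) = s + (c−1)`), then every
transposition of `σ` moves at most one point moved by `τ`: for every point `a`,
if `σ a ≠ a` and `τ a ≠ a`, then `τ (σ a) = σ a`. -/
theorem geodesic_pair_transpositions {α : Type*} [Fintype α] [DecidableEq α]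
    (σ τ : Equiv.Perm α) (s c : ℕ) (hc : 2 ≤ c)
    (hσ : σ.cycleType = Multiset.replicate s 2) (hτ : τ.cycleType = {c})
    (hadd : permNorm (σ * τ) = s + (c - 1)) :
    ∀ a : α, σ a ≠ a → τ a ≠ a → τ (σ a) = σ a := by
  classical
  intro a hσa hτa
  by_contra hne
  set b := σ a with hb
  have hab : a ≠ b := fun h => hσa h.symm
  have haσ : a ∈ σ.support := Equiv.Perm.mem_support.2 hσa
  have haτ : a ∈ τ.support := Equiv.Perm.mem_support.2 hτa
  have hbτ : b ∈ τ.support := Equiv.Perm.mem_support.2 hne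
  -- s ≥ 1
  have hs : 1 ≤ s := by
    rcases Nat.eq_zero_or_pos s with h0 | h1
    · subst h0
      rw [Multiset.replicate_zero] at hσ
      exact absurd ((Equiv.Perm.cycleType_eq_zero.1 hσ) ▸ rfl : σ a = a) hσa
    · exact h1
  -- the cycle of σ at a is swap a b
  have hpf : σ.cycleOf a ∈ σ.cycleFactorsFinset := Equiv.Perm.cycleOf_mem_cycleFactorsFinset_iff.2 haσ
  have hcard : (σ.cycleOf a).support.card = 2 := by
    have hmem : (σ.cycleOf a).support.card ∈ σ.cycleType := by
      rw [Equiv.Perm.cycleType_def]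
      exact Multiset.mem_map_of_mem _ hpf
    rw [hσ] at hmem
    exact Multiset.eq_of_mem_replicate hmem
  obtain ⟨x, y, hxy, hxyeq⟩ := Equiv.Perm.card_support_eq_two.1 hcard
  have hac : a ∈ (σ.cycleOf a).support := by
    rw [Equiv.Perm.mem_support_cycleOf_iff]
    exact ⟨Equiv.Perm.SameCycle.refl σ a, haσ⟩
  have hca : (σ.cycleOf a) a = b := Equiv.Perm.cycleOf_apply_self σ a
  have hcswap : σ.cycleOf a = Equiv.swap a b := by
    rw [hxyeq] at hac hca ⊢
    rw [Equiv.Perm.support_swap hxy] at hac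
    rcases Finset.mem_insert.1 hac with h | h
    · subst h
      rw [Equiv.swap_apply_left] at hca
      rw [hca]
    · have hay : a = y := Finset.mem_singleton.1 h
      subst hay
      rw [Equiv.swap_apply_right] at hca
      rw [← hca, Equiv.swap_comm]
  have hct : (σ.cycleOf a).cycleType = {2} := by
    have := (Equiv.Perm.mem_cycleFactorsFinset_iff.1 hpf).1.cycleType
    rw [hcard] at this
    simpa using this
  -- σ' = σ * (swap a b)⁻¹ has cycle type replicate (s-1) 2
  have hσ' : (σ * (Equiv.swap a b)⁻¹).cycleType = Multiset.replicate (s - 1) 2 := by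
    rw [← hcswap, Equiv.Perm.cycleType_mul_inv_mem_cycleFactorsFinset_eq_sub hpf, hσ, hct]
    obtain ⟨s', rfl⟩ : ∃ s', s = s' + 1 := ⟨s - 1, by omega⟩
    rw [Multiset.sub_singleton, Multiset.replicate_succ, Multiset.erase_cons_head]
    simp
  -- g = swap a b * τ
  set g : Equiv.Perm α := Equiv.swap a b * τ with hg
  have hτsupp : τ.support.card = c := by
    rw [← Equiv.Perm.sum_cycleType, hτ]
    simp
  have hτnorm : permNorm τ = c - 1 := by
    rw [permNorm, hτ]
    simp
  -- parity of permNorm g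
  have hsigng : (-1 : ℤˣ) ^ permNorm g = (-1 : ℤˣ) ^ c := by
    have h1 := sign_eq_neg_one_pow_permNorm g
    rw [hg, Equiv.Perm.sign_mul, Equiv.Perm.sign_swap hab,
      sign_eq_neg_one_pow_permNorm τ, hτnorm] at h1
    rw [← h1, ← pow_succ']
    congr 1
    omega
  have hparity : Even (permNorm g + c) := by
    have : ((-1 : ℤˣ) ^ (permNorm g + c)) = 1 := by
      rw [pow_add, hsigng, ← pow_add, ← two_mul, pow_mul]
      norm_num
    rcases Nat.even_or_odd (permNorm g + c) with h | h
    · exact h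
    · exfalso
      rw [Odd.neg_one_pow h] at this
      exact absurd this (by decide)
  -- permNorm g ≤ c - 2
  have hgnorm : permNorm g ≤ c - 2 := by
    by_cases hg1 : g = 1
    · rw [hg1]
      have : permNorm (1 : Equiv.Perm α) = 0 := by
        rw [permNorm, Equiv.Perm.cycleType_one]
        simp
      omega
    · have hsub : g.support ⊆ τ.support := by
        intro z hz
        have hz' := Equiv.Perm.support_mul_le (Equiv.swap a b) τ hz
        rw [Finset.sup_eq_union, Finset.mem_union] at hz'
        rcases hz' with h | h
        · rw [Equiv.Perm.support_swap hab] at h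
          rcases Finset.mem_insert.1 h with h | h
          · exact h ▸ haτ
          · exact (Finset.mem_singleton.1 h) ▸ hbτ
        · exact h
      have hcardg : g.support.card ≤ c := hτsupp ▸ Finset.card_le_card hsub
      have hpos : 1 ≤ Multiset.card g.cycleType := by
        rw [Nat.one_le_iff_ne_zero]
        intro h
        exact hg1 (Equiv.Perm.cycleType_eq_zero.1 (Multiset.card_eq_zero.1 h))
      have hle := permNorm_add_card g
      have hsum : g.cycleType.sum = g.support.card := Equiv.Perm.sum_cycleType g
      have hle2 : permNorm g ≤ c - 1 := by omega
      -- parity excludes c - 1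
      rcases hparity with ⟨t, ht⟩
      omega
  -- final contradiction
  have hfactor : σ * τ = (σ * (Equiv.swap a b)⁻¹) * g := by
    rw [hg, mul_assoc, ← mul_assoc (Equiv.swap a b)⁻¹, inv_mul_cancel, one_mul]
  have hfin : permNorm (σ * τ) ≤ (s - 1) + permNorm g := by
    rw [hfactor]
    exact permNorm_mul_le_of_replicate_two (s - 1) _ g hσ'
  rw [hadd] at hfin
  omega
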